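/- Let A ⊂ (0,1) be a finite set of reals and let v₁, …, v_m ∈ ℝ^n be distinct unit vectors such that |⟨v_i, v_j⟩| ∈ A ∪ {0, 1} for all i, j. Then m ≤ 2 · binomial(n + 2|A|, 2|A| + 1). -/

import Mathlib

open Finset Submodule

noncomputable def monFn (n : ℕ) (d : Fin n → ℕ) : EuclideanSpace ℝ (Fin n) → ℝ :=
  fun x => ∏ k, x k ^ d k

noncomputable def Msp (n D : ℕ) : Submodule ℝ (EuclideanSpace ℝ (Fin n) → ℝ) :=
  span ℝ (monFn n '' {d | ∑ k, d k = D})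

lemma Msp_mul {n a b : ℕ} {f g : EuclideanSpace ℝ (Fin n) → ℝ}
    (hf : f ∈ Msp n a) (hg : g ∈ Msp n b) : f * g ∈ Msp n (a + b) := by
  have h : Msp n a * Msp n b ≤ Msp n (a + b) := by
    rw [Msp, Msp, span_mul_span]
    apply span_mono
    rintro - ⟨-, ⟨d, hd, rfl⟩, -, ⟨e, he, rfl⟩, rfl⟩
    refine ⟨d + e, ?_, ?_⟩
    · simp only [Set.mem_setOf_eq] at *
      simp [Finset.sum_add_distrib, hd, he]
    · funext x
      simp [monFn, pow_add, Finset.prod_mul_distrib]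
  exact h (mul_mem_mul hf hg)

lemma Msp_one {n : ℕ} : (1 : EuclideanSpace ℝ (Fin n) → ℝ) ∈ Msp n 0 := by
  apply subset_span
  exact ⟨0, by simp, by funext x; simp [monFn]⟩

lemma monFn_single {n : ℕ} (k : Fin n) (e : ℕ) (x : EuclideanSpace ℝ (Fin n)) :
    monFn n (Pi.single k e) x = x k ^ e := by
  rw [monFn, Finset.prod_eq_single k]
  · simp
  · intro j _ hj; simp [Pi.single_apply, hj]
  · simp

lemma Msp_linear {n : ℕ} (c : Fin n → ℝ) :
    (fun x : EuclideanSpace ℝ (Fin n) => ∑ k, c k * x k) ∈ Msp n 1 := by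
  have : (fun x : EuclideanSpace ℝ (Fin n) => ∑ k, c k * x k)
      = ∑ k, c k • monFn n (Pi.single k 1) := by
    funext x
    simp [monFn_single]
  rw [this]
  apply sum_mem
  intro k _
  apply smul_mem
  apply subset_span
  exact ⟨Pi.single k 1, by simp, rfl⟩

lemma Msp_sq_sum {n : ℕ} :
    (fun x : EuclideanSpace ℝ (Fin n) => ∑ k, x k ^ 2) ∈ Msp n 2 := by
  have : (fun x : EuclideanSpace ℝ (Fin n) => ∑ k, x k ^ 2)
      = ∑ k, monFn n (Pi.single k 2) := by
    funext x
    simp [monFn_single]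
  rw [this]
  apply sum_mem
  intro k _
  apply subset_span
  exact ⟨Pi.single k 2, by simp, rfl⟩

lemma Msp_prod {n : ℕ} (s : Finset ℝ) (F : ℝ → (EuclideanSpace ℝ (Fin n) → ℝ))
    (h : ∀ a ∈ s, F a ∈ Msp n 2) : (∏ a ∈ s, F a) ∈ Msp n (2 * s.card) := by
  induction s using Finset.cons_induction with
  | empty => simpa using Msp_one
  | cons a s ha ih =>
    rw [Finset.prod_cons, Finset.card_cons]
    have : 2 * (s.card + 1) = 2 + 2 * s.card := by ring
    rw [this]
    exact Msp_mul (h a (Finset.mem_cons_self a s))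
      (ih fun b hb => h b (Finset.mem_cons_of_mem hb))

/-- The DGS test function attached to a unit vector `w`. -/
noncomputable def dgsFn {n : ℕ} (A : Finset ℝ) (w : EuclideanSpace ℝ (Fin n)) :
    EuclideanSpace ℝ (Fin n) → ℝ :=
  (fun x => (inner ℝ w x : ℝ)) * ∏ a ∈ A, fun x => (inner ℝ w x : ℝ) ^ 2 - a ^ 2 * ‖x‖ ^ 2

lemma dgsFn_apply {n : ℕ} (A : Finset ℝ) (w x : EuclideanSpace ℝ (Fin n)) :
    dgsFn A w x = (inner ℝ w x : ℝ) * ∏ a ∈ A, ((inner ℝ w x : ℝ) ^ 2 - a ^ 2 * ‖x‖ ^ 2) := by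
  simp [dgsFn]

lemma inner_fn_eq {n : ℕ} (w : EuclideanSpace ℝ (Fin n)) :
    (fun x : EuclideanSpace ℝ (Fin n) => (inner ℝ w x : ℝ))
      = fun x => ∑ k, w k * x k := by
  funext x
  simp [PiLp.inner_apply, RCLike.inner_apply, conj_trivial, mul_comm]

lemma norm_sq_fn_eq {n : ℕ} :
    (fun x : EuclideanSpace ℝ (Fin n) => ‖x‖ ^ 2) = fun x => ∑ k, x k ^ 2 := by
  funext x
  rw [← real_inner_self_eq_norm_sq]
  simp only [PiLp.inner_apply, RCLike.inner_apply, conj_trivial, sq]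

lemma dgsFn_mem {n : ℕ} (A : Finset ℝ) (w : EuclideanSpace ℝ (Fin n)) :
    dgsFn A w ∈ Msp n (2 * A.card + 1) := by
  rw [dgsFn, add_comm]
  apply Msp_mul
  · rw [inner_fn_eq]; exact Msp_linear w
  · apply Msp_prod
    intro a _
    have : (fun x : EuclideanSpace ℝ (Fin n) => (inner ℝ w x : ℝ) ^ 2 - a ^ 2 * ‖x‖ ^ 2)
        = ((fun x => (inner ℝ w x : ℝ)) * (fun x => (inner ℝ w x : ℝ))
          - (a ^ 2) • fun x => ‖x‖ ^ 2) := by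
      funext x
      simp only [Pi.sub_apply, Pi.mul_apply, Pi.smul_apply, smul_eq_mul]
      ring
    rw [this]
    have h1 : (fun x : EuclideanSpace ℝ (Fin n) => (inner ℝ w x : ℝ)) ∈ Msp n 1 := by
      rw [inner_fn_eq]; exact Msp_linear w
    have h2 := Msp_mul h1 h1
    norm_num at h2
    refine sub_mem h2 (smul_mem _ _ ?_)
    rw [norm_sq_fn_eq]
    exact Msp_sq_sum

lemma card_antidiagonalTuple_le (n D : ℕ) :
    (Finset.Nat.antidiagonalTuple n D).card ≤ (n + D - 1).choose D := by
  classical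
  have key : ∀ d : ↥(Finset.Nat.antidiagonalTuple n D),
      Multiset.card (∑ k, Multiset.replicate (d.1 k) k) = D := by
    rintro ⟨d, hd⟩
    rw [Finset.Nat.mem_antidiagonalTuple] at hd
    have hc : Multiset.card (∑ k, Multiset.replicate (d k) k)
        = ∑ k : Fin n, Multiset.card (Multiset.replicate (d k) k) :=
      map_sum (⟨⟨Multiset.card, Multiset.card_zero⟩, Multiset.card_add⟩ :
        Multiset (Fin n) →+ ℕ) _ _
    simp only [Multiset.card_replicate] at hc
    show Multiset.card (∑ k, Multiset.replicate (d k) k) = D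
    rw [hc]; exact hd
  have hinj : Function.Injective
      (fun d : ↥(Finset.Nat.antidiagonalTuple n D) =>
        (⟨∑ k, Multiset.replicate (d.1 k) k, key d⟩ : Sym (Fin n) D)) := by
    rintro ⟨d, hd⟩ ⟨e, he⟩ h
    simp only [Subtype.mk.injEq] at h
    ext1
    funext j
    have := congrArg (Multiset.count j) h
    simpa [Multiset.count_sum', Multiset.count_replicate] using this
  have := Fintype.card_le_of_injective (β := Sym (Fin n) D) _ hinj
  rwa [Fintype.card_coe, Sym.card_sym_eq_choose, Fintype.card_fin] at this

lemma Msp_eq_span_T (n D : ℕ) [DecidableEq (EuclideanSpace ℝ (Fin n) → ℝ)] :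
    Msp n D = Submodule.span ℝ
      (((Finset.Nat.antidiagonalTuple n D).image (monFn n) : Finset _) : Set _) := by
  rw [Msp, Finset.coe_image]
  congr 1
  ext d
  simp [Finset.Nat.mem_antidiagonalTuple]

set_option maxHeartbeats 1000000 in
/-- **Delsarte–Goethals–Seidel bound.** If `v₁, …, v_m ∈ ℝ^n` are distinct unit vectors
whose pairwise inner products satisfy `|⟨v_i, v_j⟩| ∈ A ∪ {0, 1}` for a finite set
`A ⊂ (0, 1)`, then `m ≤ 2 * (n + 2|A|).choose (2|A| + 1)`. -/
theorem delsarte_goethals_seidel (n m : ℕ) (A : Finset ℝ) (hA : ↑A ⊆ Set.Ioo (0 : ℝ) 1)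
    (v : Fin m → EuclideanSpace ℝ (Fin n)) (hv : Function.Injective v)
    (hunit : ∀ i, ‖v i‖ = 1)
    (hangles : ∀ i j, |(inner ℝ (v i) (v j) : ℝ)| ∈ (A : Set ℝ) ∪ {0, 1}) :
    m ≤ 2 * Nat.choose (n + 2 * A.card) (2 * A.card + 1) := by
  classical
  set D := 2 * A.card + 1 with hD
  set S : Finset (Fin m) := Finset.univ.filter (fun i => ∀ j, v j = -v i → i ≤ j) with hS
  -- Step 1: m ≤ 2 * S.card
  have hmS : m ≤ 2 * S.card := by
    have hsplit := Finset.card_filter_add_card_filter_not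
      (s := (Finset.univ : Finset (Fin m))) (p := fun i => ∀ j, v j = -v i → i ≤ j)
    have hinj : (Finset.univ.filter fun i => ¬ ∀ j, v j = -v i → i ≤ j).card ≤ S.card := by
      set φ : Fin m → Fin m := fun i => if h : ∃ j, v j = -v i then h.choose else i with hφ
      apply Finset.card_le_card_of_injOn φ
      · intro i hi
        rw [Finset.mem_coe, Finset.mem_filter] at hi
        push_neg at hi
        obtain ⟨j, hj, hij⟩ := hi.2
        have hex : ∃ k, v k = -v i := ⟨j, hj⟩
        have hφi : φ i = hex.choose := by simp [hφ, hex]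
        have hφspec : v (φ i) = -v i := by rw [hφi]; exact hex.choose_spec
        have hji : φ i = j := hv (by rw [hφspec, hj])
        rw [hS, Finset.mem_coe, Finset.mem_filter]
        refine ⟨Finset.mem_univ _, fun k hk => ?_⟩
        have : v k = v i := by rw [hk, hφspec, neg_neg]
        rw [hv this, hji]
        exact le_of_lt hij
      · intro i₁ h₁ i₂ h₂ he
        simp only [Finset.mem_coe, Finset.mem_filter] at h₁ h₂
        push_neg at h₁ h₂
        obtain ⟨j₁, hj₁, -⟩ := h₁.2
        obtain ⟨j₂, hj₂, -⟩ := h₂.2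
        have hex₁ : ∃ k, v k = -v i₁ := ⟨j₁, hj₁⟩
        have hex₂ : ∃ k, v k = -v i₂ := ⟨j₂, hj₂⟩
        have e₁ : v (φ i₁) = -v i₁ := by simp only [hφ, dif_pos hex₁]; exact hex₁.choose_spec
        have e₂ : v (φ i₂) = -v i₂ := by simp only [hφ, dif_pos hex₂]; exact hex₂.choose_spec
        apply hv
        have : -v i₁ = -v i₂ := by rw [← e₁, ← e₂, he]
        simpa using this
    rw [← hS, Finset.card_univ, Fintype.card_fin] at hsplit
    omega
  -- inner products
  have hval : ∀ i j : Fin m, dgsFn A (v i) (v j)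
      = (inner ℝ (v i) (v j) : ℝ) * ∏ a ∈ A, ((inner ℝ (v i) (v j) : ℝ) ^ 2 - a ^ 2) := by
    intro i j
    rw [dgsFn_apply]
    simp [hunit j]
  have hdiag : ∀ j : Fin m, dgsFn A (v j) (v j) = ∏ a ∈ A, (1 - a ^ 2) := by
    intro j
    rw [hval]
    have h1 : (inner ℝ (v j) (v j) : ℝ) = 1 := by
      rw [real_inner_self_eq_norm_sq, hunit j]; norm_num
    rw [h1]; simp
  have hpos : (0 : ℝ) < ∏ a ∈ A, (1 - a ^ 2) := by
    apply Finset.prod_pos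
    intro a ha
    have h := hA (Finset.mem_coe.mpr ha)
    nlinarith [h.1, h.2]
  have hoff : ∀ i j : Fin m, i ∈ S → j ∈ S → i ≠ j → dgsFn A (v i) (v j) = 0 := by
    intro i j hiS hjS hij
    rw [hval]
    set t := (inner ℝ (v i) (v j) : ℝ) with ht
    rcases hangles i j with hmem | h01
    · apply mul_eq_zero_of_right
      apply Finset.prod_eq_zero (Finset.mem_coe.mp hmem)
      rw [← ht, sq_abs]
      ring
    · rcases h01 with h0 | h1
      · have : t = 0 := abs_eq_zero.mp h0
        rw [this]; simp
      · exfalso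
        have h1' : |t| = 1 := h1
        rcases (abs_eq (by norm_num : (0:ℝ) ≤ 1)).mp h1' with hte | hte
        · exact hij (hv ((inner_eq_one_iff_of_norm_eq_one (hunit i) (hunit j)).mp hte))
        · have hip : (inner ℝ (v i) (-(v j)) : ℝ) = 1 := by
            rw [inner_neg_right, ← ht, hte]; ring
          have hvij : v i = -(v j) :=
            (inner_eq_one_iff_of_norm_eq_one (hunit i) (by simpa using hunit j)).mp hip
          have hvji : v j = -(v i) := by rw [hvij, neg_neg]
          have hle1 : j ≤ i := (Finset.mem_filter.mp hjS).2 i hvij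
          have hle2 : i ≤ j := (Finset.mem_filter.mp hiS).2 j hvji
          exact hij (le_antisymm hle2 hle1)
  -- Step 2: linear independence
  have hli : LinearIndependent ℝ (fun i : ↥S => dgsFn A (v i)) := by
    refine Fintype.linearIndependent_iff.mpr fun g hg j => ?_
    have hgj := congrFun hg (v j)
    simp only [Finset.sum_apply, Pi.smul_apply, smul_eq_mul, Pi.zero_apply] at hgj
    rw [Finset.sum_eq_single j] at hgj
    · rw [hdiag] at hgj
      rcases mul_eq_zero.mp hgj with h | h
      · exact h
      · exact absurd h hpos.ne'
    · intro i _ hij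
      rw [hoff i j i.2 j.2 (fun h => hij (Subtype.ext h)), mul_zero]
    · intro h
      exact absurd (Finset.mem_univ j) h
  -- Step 3: dimension bound
  set T : Finset (EuclideanSpace ℝ (Fin n) → ℝ) :=
    (Finset.Nat.antidiagonalTuple n D).image (monFn n) with hT
  have hrange : Set.range (fun i : ↥S => dgsFn A (v i)) ≤
      (Submodule.span ℝ (↑T : Set (EuclideanSpace ℝ (Fin n) → ℝ)) :
        Set (EuclideanSpace ℝ (Fin n) → ℝ)) := by
    rintro - ⟨i, rfl⟩
    rw [hT, ← Msp_eq_span_T]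
    exact dgsFn_mem A (v i.1)
  have hSle : S.card ≤ T.card := by
    have hcard := linearIndependent_le_span' _ hli (↑T : Set _) hrange
    rw [Cardinal.mk_coe_finset] at hcard
    have h2 : Fintype.card (↑T : Set (EuclideanSpace ℝ (Fin n) → ℝ)) = T.card := by
      simp
    rw [h2] at hcard
    exact_mod_cast hcard
  have hTle : T.card ≤ (n + 2 * A.card).choose D := by
    calc T.card ≤ (Finset.Nat.antidiagonalTuple n D).card := Finset.card_image_le
      _ ≤ (n + D - 1).choose D := card_antidiagonalTuple_le n D
      _ = (n + 2 * A.card).choose D := by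
          have h3 : n + D - 1 = n + 2 * A.card := by omega
          rw [h3]
  omega
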